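/- There is a bijection between (isomorphism classes of) split graphs on n vertices and (isomorphism classes of) posets of height at most one on n elements, obtained by taking an S-max KS-partition of the split graph and declaring x ≺ y iff x ∈ S, y ∈ K, and xy is an edge; the inverse makes the height-1 elements into a clique. -/

import Mathlib

open SimpleGraph
attribute [local instance] Classical.propDecidable

variable {V : Type*} [Fintype V] [DecidableEq V]

/-- A set of vertices is stable (independent) if no two of its elements are adjacent. -/
def IsStableSet (G : SimpleGraph V) (s : Set V) : Prop :=
  s.Pairwise fun a b => ¬ G.Adj a b

/-- The clique number ω(G). -/
noncomputable def omegaNum (G : SimpleGraph V) : ℕ :=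
  Finset.univ.sup fun s : Finset V => if G.IsClique (s : Set V) then s.card else 0

/-- The independence number α(G). -/
noncomputable def alphaNum (G : SimpleGraph V) : ℕ :=
  Finset.univ.sup fun s : Finset V => if IsStableSet G (s : Set V) then s.card else 0

/-- A KS-partition of `G`: a partition of the vertex set into a clique `K` and a stable set `S`. -/
def IsKSPartition (G : SimpleGraph V) (K S : Finset V) : Prop :=
  Disjoint K S ∧ K ∪ S = Finset.univ ∧ G.IsClique (K : Set V) ∧ IsStableSet G (S : Set V)

/-- `G` is a split graph. -/
def IsSplit (G : SimpleGraph V) : Prop := ∃ K S : Finset V, IsKSPartition G K S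

/-- A split graph is balanced if it has a KS-partition with `|K| = ω(G)` and `|S| = α(G)`. -/
def IsBalanced (G : SimpleGraph V) : Prop :=
  ∃ K S : Finset V, IsKSPartition G K S ∧ K.card = omegaNum G ∧ S.card = alphaNum G

/-- A bipartite poset on `Fin n`: a strict partial order of height at most one
(no chain x ≺ y ≺ z). -/
structure BipPoset (n : ℕ) where
  lt : Fin n → Fin n → Prop
  irrefl : ∀ a, ¬ lt a a
  trans : ∀ a b c, lt a b → lt b c → lt a c
  height_le_one : ∀ a b c, ¬ (lt a b ∧ lt b c)

/-- An element has height 1 if some element lies strictly below it. -/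
def HeightOne {n : ℕ} (P : BipPoset n) (y : Fin n) : Prop := ∃ u, P.lt u y

/-- A full support point: a height-0 element comparable to every height-1 element. -/
def FullSupport {n : ℕ} (P : BipPoset n) (x : Fin n) : Prop :=
  (∀ u, ¬ P.lt u x) ∧ ∀ y, HeightOne P y → P.lt x y

/-- Isomorphism of bipartite posets on `Fin n`. -/
def BipPosetRel (n : ℕ) (P Q : BipPoset n) : Prop :=
  ∃ e : Equiv.Perm (Fin n), ∀ a b, P.lt a b ↔ Q.lt (e a) (e b)

/-- Isomorphism of split graphs on `Fin n`. -/
def SplitIsoRel (n : ℕ) (G H : {G : SimpleGraph (Fin n) // IsSplit G}) : Prop :=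
  Nonempty (G.1 ≃g H.1)


namespace SplitPosetAux

variable {n : ℕ}

/-! ### Basic constructions -/

/-- The bipartite poset built from a graph and a (K,S)-partition. -/
def posetOf (G : SimpleGraph (Fin n)) (K S : Finset (Fin n)) : BipPoset n where
  lt a b := a ∈ S ∧ b ∈ K ∧ a ∉ K ∧ G.Adj a b
  irrefl a h := G.loopless.irrefl a h.2.2.2
  trans _ b _ h1 h2 := absurd h1.2.1 h2.2.2.1
  height_le_one _ b _ h := h.2.2.2.1 h.1.2.1

lemma posetOf_lt {G : SimpleGraph (Fin n)} {K S : Finset (Fin n)} {a b : Fin n} :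
    (posetOf G K S).lt a b ↔ a ∈ S ∧ b ∈ K ∧ a ∉ K ∧ G.Adj a b := Iff.rfl

/-- The split graph built from a bipartite poset. -/
def graphOf (P : BipPoset n) : SimpleGraph (Fin n) where
  Adj x y := x ≠ y ∧ ((HeightOne P x ∧ HeightOne P y) ∨ P.lt x y ∨ P.lt y x)
  symm := ⟨fun x y h => ⟨Ne.symm h.1, by tauto⟩⟩
  loopless := ⟨fun x h => h.1 rfl⟩

lemma graphOf_adj (P : BipPoset n) (x y : Fin n) :
    (graphOf P).Adj x y ↔ x ≠ y ∧ ((HeightOne P x ∧ HeightOne P y) ∨ P.lt x y ∨ P.lt y x) :=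
  Iff.rfl

/-- An S-max KS-partition. -/
def SMax {V : Type*} [Fintype V] [DecidableEq V] (G : SimpleGraph V) (K S : Finset V) : Prop :=
  IsKSPartition G K S ∧ S.card = alphaNum G

/-! ### alphaNum facts -/

variable {V : Type*} [Fintype V] [DecidableEq V]

lemma stable_card_le {G : SimpleGraph V} {s : Finset V} (hs : IsStableSet G ↑s) :
    s.card ≤ alphaNum G := by
  have := Finset.le_sup (f := fun s : Finset V => if IsStableSet G (↑s : Set V) then s.card else 0)
    (Finset.mem_univ s)
  simp only [if_pos hs] at this
  exact this

lemma exists_alpha_set (G : SimpleGraph V) :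
    ∃ s : Finset V, IsStableSet G ↑s ∧ s.card = alphaNum G := by
  obtain ⟨s, -, hs⟩ := Finset.exists_mem_eq_sup (Finset.univ : Finset (Finset V))
    ⟨∅, Finset.mem_univ ∅⟩ (fun s : Finset V => if IsStableSet G (↑s : Set V) then s.card else 0)
  by_cases h : IsStableSet G (↑s : Set V)
  · exact ⟨s, h, by rw [alphaNum, hs, if_pos h]⟩
  · refine ⟨∅, by simp [IsStableSet], ?_⟩
    rw [alphaNum, hs, if_neg h]; simp

/-! ### Partition facts -/

lemma mem_K_iff {G : SimpleGraph V} {K S : Finset V} (h : IsKSPartition G K S) (a : V) :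
    a ∈ K ↔ a ∉ S := by
  constructor
  · exact fun hK hS => Finset.disjoint_left.1 h.1 hK hS
  · intro hS
    have ha : a ∈ K ∪ S := by rw [h.2.1]; exact Finset.mem_univ a
    rcases Finset.mem_union.1 ha with h' | h'
    · exact h'
    · exact absurd h' hS

lemma mem_S_of_not_K {G : SimpleGraph V} {K S : Finset V} (h : IsKSPartition G K S) {a : V}
    (ha : a ∉ K) : a ∈ S := by
  by_contra hc
  exact ha ((mem_K_iff h a).2 hc)

lemma clique_adj {G : SimpleGraph V} {K S : Finset V} (h : IsKSPartition G K S)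
    {a b : V} (ha : a ∈ K) (hb : b ∈ K) (hne : a ≠ b) : G.Adj a b :=
  h.2.2.1 (Finset.mem_coe.2 ha) (Finset.mem_coe.2 hb) hne

lemma stable_not_adj {G : SimpleGraph V} {K S : Finset V} (h : IsKSPartition G K S)
    {a b : V} (ha : a ∈ S) (hb : b ∈ S) (hne : a ≠ b) : ¬ G.Adj a b :=
  h.2.2.2 (Finset.mem_coe.2 ha) (Finset.mem_coe.2 hb) hne

lemma exists_smax {G : SimpleGraph V} (h : IsSplit G) : ∃ K S : Finset V, SMax G K S := by
  obtain ⟨K, S, hKS⟩ := h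
  obtain ⟨S', hS', hcard⟩ := exists_alpha_set G
  have hSle : S.card ≤ alphaNum G := stable_card_le hKS.2.2.2
  by_cases heq : S.card = alphaNum G
  · exact ⟨K, S, hKS, heq⟩
  have hint : (S' ∩ K).card ≤ 1 := by
    rw [Finset.card_le_one]
    intro a ha b hb
    by_contra hne
    exact hS' (Finset.mem_coe.2 (Finset.mem_of_mem_inter_left ha))
      (Finset.mem_coe.2 (Finset.mem_of_mem_inter_left hb)) hne
      (clique_adj hKS (Finset.mem_of_mem_inter_right ha) (Finset.mem_of_mem_inter_right hb) hne)
  have hdecomp : S'.card ≤ (S' ∩ K).card + (S' ∩ S).card := by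
    have h1 : S' = S' ∩ (K ∪ S) := by rw [hKS.2.1, Finset.inter_univ]
    calc S'.card = (S' ∩ K ∪ S' ∩ S).card := by rw [← Finset.inter_union_distrib_left, ← h1]
      _ ≤ (S' ∩ K).card + (S' ∩ S).card := Finset.card_union_le _ _
  have hlt : S.card < S'.card := by omega
  have hmid : (S' ∩ S).card ≤ S.card := Finset.card_le_card Finset.inter_subset_right
  have h4 : S' ∩ S = S :=
    Finset.eq_of_subset_of_card_le Finset.inter_subset_right (by omega)
  have hSsub : S ⊆ S' := by
    intro x hx
    rw [← h4] at hx
    exact Finset.mem_of_mem_inter_left hx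
  obtain ⟨y0, hy0⟩ : (S' \ S).Nonempty := by
    rw [Finset.sdiff_nonempty]
    intro hsub
    exact absurd (Finset.card_le_card hsub) (by omega)
  have hy0S' : y0 ∈ S' := (Finset.mem_sdiff.1 hy0).1
  have hy0S : y0 ∉ S := (Finset.mem_sdiff.1 hy0).2
  have hy0K : y0 ∈ K := (mem_K_iff hKS y0).2 hy0S
  refine ⟨K.erase y0, S', ⟨?_, ?_, ?_, hS'⟩, hcard⟩
  · rw [Finset.disjoint_left]
    intro x hx hxS'
    have hxK : x ∈ K := Finset.mem_of_mem_erase hx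
    have : x = y0 := Finset.card_le_one.1 hint x (Finset.mem_inter.2 ⟨hxS', hxK⟩) y0
      (Finset.mem_inter.2 ⟨hy0S', hy0K⟩)
    exact (Finset.ne_of_mem_erase hx) this
  · apply Finset.eq_univ_of_forall
    intro v
    by_cases hv : v ∈ S'
    · exact Finset.mem_union.2 (Or.inr hv)
    · have hvS : v ∉ S := fun h' => hv (hSsub h')
      have hvK : v ∈ K := (mem_K_iff hKS v).2 hvS
      have hvy : v ≠ y0 := fun h' => hv (h' ▸ hy0S')
      exact Finset.mem_union.2 (Or.inl (Finset.mem_erase.2 ⟨hvy, hvK⟩))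
  · exact hKS.2.2.1.subset (by
      intro x hx
      exact Finset.mem_coe.2 (Finset.mem_of_mem_erase (Finset.mem_coe.1 hx)))

lemma smax_covered {G : SimpleGraph V} {K S : Finset V} (h : SMax G K S) {k : V} (hk : k ∈ K) :
    ∃ s ∈ S, G.Adj s k := by
  by_contra hc
  push_neg at hc
  have hkS : k ∉ S := (mem_K_iff h.1 k).1 hk
  have hstab : IsStableSet G ↑(insert k S) := by
    intro a ha b hb hne
    rw [Finset.coe_insert, Set.mem_insert_iff] at ha hb
    rcases ha with rfl | ha <;> rcases hb with rfl | hb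
    · exact absurd rfl hne
    · exact fun hadj => hc b (Finset.mem_coe.1 hb) hadj.symm
    · exact fun hadj => hc a (Finset.mem_coe.1 ha) hadj
    · exact stable_not_adj h.1 (Finset.mem_coe.1 ha) (Finset.mem_coe.1 hb) hne
  have := stable_card_le hstab
  rw [Finset.card_insert_of_notMem hkS, h.2] at this
  omega

/-! ### Relation lemmas -/

lemma bip_trans {P Q R : BipPoset n} (h : BipPosetRel n P Q) (h' : BipPosetRel n Q R) :
    BipPosetRel n P R := by
  obtain ⟨e, he⟩ := h
  obtain ⟨e', he'⟩ := h'
  exact ⟨e.trans e', fun a b => (he a b).trans (he' (e a) (e b))⟩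

/-! ### Two S-max partitions give isomorphic posets -/

lemma swap_lt_mp {G : SimpleGraph (Fin n)} {K S K' S' : Finset (Fin n)} {x0 y0 : Fin n}
    (hKS : IsKSPartition G K S) (hKS' : IsKSPartition G K' S')
    (hx0S : x0 ∈ S) (hy0S' : y0 ∈ S') (hx0 : x0 ∉ S') (hy0 : y0 ∉ S)
    (hD : ∀ a, a ∈ S → a ≠ x0 → a ∈ S') (hD' : ∀ a, a ∈ S' → a ≠ y0 → a ∈ S)
    {a b : Fin n} (h : (posetOf G K S).lt a b) :
    (posetOf G K' S').lt (Equiv.swap x0 y0 a) (Equiv.swap x0 y0 b) := by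
  obtain ⟨haS, hbK, haK, hadj⟩ := h
  have hbS : b ∉ S := (mem_K_iff hKS b).1 hbK
  have hbx : b ≠ x0 := fun h' => hbS (h' ▸ hx0S)
  have hy0K : y0 ∈ K := (mem_K_iff hKS y0).2 hy0
  have hx0K' : x0 ∈ K' := (mem_K_iff hKS' x0).2 hx0
  have hay : a ≠ y0 := fun h' => hy0 (h' ▸ haS)
  have heaS' : Equiv.swap x0 y0 a ∈ S' := by
    by_cases hax : a = x0
    · rw [hax, Equiv.swap_apply_left]; exact hy0S'
    · rw [Equiv.swap_apply_of_ne_of_ne hax hay]; exact hD a haS hax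
  have hebK' : Equiv.swap x0 y0 b ∈ K' := by
    by_cases hby : b = y0
    · rw [hby, Equiv.swap_apply_right]; exact hx0K'
    · rw [Equiv.swap_apply_of_ne_of_ne hbx hby]
      exact (mem_K_iff hKS' b).2 (fun hbS' => hbS (hD' b hbS' hby))
  refine ⟨heaS', hebK', fun h' => Finset.disjoint_left.1 hKS'.1 h' heaS', ?_⟩
  by_cases hax : a = x0 <;> by_cases hby : b = y0
  · rw [hax, hby, Equiv.swap_apply_left, Equiv.swap_apply_right]
    exact (hax ▸ hby ▸ hadj).symm
  · rw [hax, Equiv.swap_apply_left, Equiv.swap_apply_of_ne_of_ne hbx hby]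
    exact clique_adj hKS hy0K hbK (fun h' => hby h'.symm)
  · exfalso
    have haS' : a ∈ S' := hD a haS hax
    exact stable_not_adj hKS' haS' hy0S' hay (hby ▸ hadj)
  · rw [Equiv.swap_apply_of_ne_of_ne hax hay, Equiv.swap_apply_of_ne_of_ne hbx hby]
    exact hadj

lemma two_smax_rel {G : SimpleGraph (Fin n)} {K S K' S' : Finset (Fin n)}
    (h : SMax G K S) (h' : SMax G K' S') :
    BipPosetRel n (posetOf G K S) (posetOf G K' S') := by
  have hc : S.card = S'.card := by rw [h.2, h'.2]
  have hDD' : (S \ S').card = (S' \ S).card := Finset.card_sdiff_comm hc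
  have hle : (S' \ S).card ≤ 1 := by
    rw [Finset.card_le_one]
    intro a ha b hb
    by_contra hne
    have haK : a ∈ K := (mem_K_iff h.1 a).2 (Finset.mem_sdiff.1 ha).2
    have hbK : b ∈ K := (mem_K_iff h.1 b).2 (Finset.mem_sdiff.1 hb).2
    exact stable_not_adj h'.1 (Finset.mem_sdiff.1 ha).1 (Finset.mem_sdiff.1 hb).1 hne
      (clique_adj h.1 haK hbK hne)
  rcases Nat.le_one_iff_eq_zero_or_eq_one.1 hle with h0 | h1
  · have hSS' : S = S' := by
      have e1 : S' \ S = ∅ := Finset.card_eq_zero.1 h0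
      have e2 : S \ S' = ∅ := Finset.card_eq_zero.1 (hDD'.trans h0)
      exact Finset.Subset.antisymm (Finset.sdiff_eq_empty_iff_subset.1 e2)
        (Finset.sdiff_eq_empty_iff_subset.1 e1)
    have hKK' : K = K' := by
      ext x
      rw [mem_K_iff h.1, mem_K_iff h'.1, hSS']
    subst hSS'; subst hKK'
    exact ⟨Equiv.refl _, fun a b => Iff.rfl⟩
  · obtain ⟨y0, hy0⟩ := Finset.card_eq_one.1 h1
    obtain ⟨x0, hx0⟩ := Finset.card_eq_one.1 (hDD'.trans h1)
    have hx0m : x0 ∈ S \ S' := hx0 ▸ Finset.mem_singleton_self x0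
    have hy0m : y0 ∈ S' \ S := hy0 ▸ Finset.mem_singleton_self y0
    have hx0S : x0 ∈ S := (Finset.mem_sdiff.1 hx0m).1
    have hx0S' : x0 ∉ S' := (Finset.mem_sdiff.1 hx0m).2
    have hy0S' : y0 ∈ S' := (Finset.mem_sdiff.1 hy0m).1
    have hy0S : y0 ∉ S := (Finset.mem_sdiff.1 hy0m).2
    have hD : ∀ a, a ∈ S → a ≠ x0 → a ∈ S' := by
      intro a ha hax
      by_contra hc'
      have hmem : a ∈ S \ S' := Finset.mem_sdiff.2 ⟨ha, hc'⟩
      rw [hx0] at hmem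
      exact hax (Finset.mem_singleton.1 hmem)
    have hD' : ∀ a, a ∈ S' → a ≠ y0 → a ∈ S := by
      intro a ha hay
      by_contra hc'
      have hmem : a ∈ S' \ S := Finset.mem_sdiff.2 ⟨ha, hc'⟩
      rw [hy0] at hmem
      exact hay (Finset.mem_singleton.1 hmem)
    refine ⟨Equiv.swap x0 y0, fun a b =>
      ⟨swap_lt_mp h.1 h'.1 hx0S hy0S' hx0S' hy0S hD hD', ?_⟩⟩
    intro hlt
    have hback := swap_lt_mp h'.1 h.1 hy0S' hx0S hy0S hx0S' hD' hD
      (a := Equiv.swap x0 y0 a) (b := Equiv.swap x0 y0 b) hlt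
    rwa [Equiv.swap_comm y0 x0, Equiv.swap_apply_self, Equiv.swap_apply_self] at hback

/-! ### Transport along graph isomorphisms -/

lemma stable_image {G H : SimpleGraph V} (f : G ≃g H) {s : Finset V}
    (hs : IsStableSet G ↑s) : IsStableSet H ↑(s.image f) := by
  intro x hx y hy hne
  rw [Finset.coe_image, Set.mem_image] at hx hy
  obtain ⟨a, ha, rfl⟩ := hx
  obtain ⟨b, hb, rfl⟩ := hy
  intro hadj
  exact hs ha hb (fun h' => hne (by rw [h'])) (f.map_adj_iff.1 hadj)

lemma alpha_le_iso {G H : SimpleGraph V} (f : G ≃g H) : alphaNum G ≤ alphaNum H := by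
  rw [alphaNum]
  apply Finset.sup_le
  intro s _
  by_cases hs : IsStableSet G (↑s : Set V)
  · rw [if_pos hs]
    calc s.card = (s.image f).card := (Finset.card_image_of_injective _ f.injective).symm
      _ ≤ alphaNum H := stable_card_le (stable_image f hs)
  · rw [if_neg hs]; exact Nat.zero_le _

lemma smax_image {G H : SimpleGraph (Fin n)} (f : G ≃g H) {K S : Finset (Fin n)}
    (h : SMax G K S) : SMax H (K.image f) (S.image f) := by
  obtain ⟨⟨hdisj, huniv, hclq, hstab⟩, hcard⟩ := h
  refine ⟨⟨?_, ?_, ?_, stable_image f hstab⟩, ?_⟩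
  · exact (Finset.disjoint_image f.injective).2 hdisj
  · apply Finset.eq_univ_of_forall
    intro v
    have hv : f.symm v ∈ K ∪ S := by rw [huniv]; exact Finset.mem_univ _
    rcases Finset.mem_union.1 hv with h' | h'
    · exact Finset.mem_union.2 (Or.inl (Finset.mem_image.2 ⟨f.symm v, h', f.apply_symm_apply v⟩))
    · exact Finset.mem_union.2 (Or.inr (Finset.mem_image.2 ⟨f.symm v, h', f.apply_symm_apply v⟩))
  · intro x hx y hy hne
    rw [Finset.coe_image, Set.mem_image] at hx hy
    obtain ⟨a, ha, rfl⟩ := hx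
    obtain ⟨b, hb, rfl⟩ := hy
    exact f.map_adj_iff.2 (hclq ha hb (fun h' => hne (by rw [h'])))
  · rw [Finset.card_image_of_injective _ f.injective, hcard]
    exact le_antisymm (alpha_le_iso f) (alpha_le_iso f.symm)

lemma posetOf_image_rel {G H : SimpleGraph (Fin n)} (f : G ≃g H) {K S : Finset (Fin n)} :
    BipPosetRel n (posetOf G K S) (posetOf H (K.image f) (S.image f)) := by
  refine ⟨f.toEquiv, fun a b => ?_⟩
  have hmem : ∀ (T : Finset (Fin n)) (x : Fin n), x ∈ T ↔ f.toEquiv x ∈ T.image f := by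
    intro T x
    constructor
    · exact fun hx => Finset.mem_image.2 ⟨x, hx, rfl⟩
    · intro hx
      obtain ⟨y, hy, hyx⟩ := Finset.mem_image.1 hx
      rwa [← f.injective hyx]
  rw [posetOf_lt, posetOf_lt, ← hmem K a, ← hmem S a, ← hmem K b]
  constructor
  · rintro ⟨h1, h2, h3, h4⟩
    exact ⟨h1, h2, h3, f.map_adj_iff.2 h4⟩
  · rintro ⟨h1, h2, h3, h4⟩
    exact ⟨h1, h2, h3, f.map_adj_iff.1 h4⟩

/-! ### The poset-to-graph direction -/

noncomputable def KP (P : BipPoset n) : Finset (Fin n) := Finset.univ.filter (HeightOne P)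
noncomputable def SP (P : BipPoset n) : Finset (Fin n) :=
  Finset.univ.filter (fun y => ¬ HeightOne P y)

lemma mem_KP {P : BipPoset n} {x : Fin n} : x ∈ KP P ↔ HeightOne P x := by
  simp [KP]

lemma mem_SP {P : BipPoset n} {x : Fin n} : x ∈ SP P ↔ ¬ HeightOne P x := by
  simp [SP]

lemma low_of_lt {P : BipPoset n} {a b : Fin n} (h : P.lt a b) : ¬ HeightOne P a := by
  rintro ⟨u, hu⟩
  exact P.height_le_one u a b ⟨hu, h⟩

lemma smax_graphOf (P : BipPoset n) : SMax (graphOf P) (KP P) (SP P) := by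
  have hpart : IsKSPartition (graphOf P) (KP P) (SP P) := by
    refine ⟨?_, ?_, ?_, ?_⟩
    · rw [Finset.disjoint_left]
      intro x hx hx'
      exact (mem_SP.1 hx') (mem_KP.1 hx)
    · apply Finset.eq_univ_of_forall
      intro v
      by_cases hv : HeightOne P v
      · exact Finset.mem_union.2 (Or.inl (mem_KP.2 hv))
      · exact Finset.mem_union.2 (Or.inr (mem_SP.2 hv))
    · intro x hx y hy hne
      exact ⟨hne, Or.inl ⟨mem_KP.1 (Finset.mem_coe.1 hx), mem_KP.1 (Finset.mem_coe.1 hy)⟩⟩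
    · intro x hx y hy hne hadj
      rcases hadj.2 with ⟨h1, _⟩ | hlt | hlt
      · exact (mem_SP.1 (Finset.mem_coe.1 hx)) h1
      · exact (mem_SP.1 (Finset.mem_coe.1 hy)) ⟨x, hlt⟩
      · exact (mem_SP.1 (Finset.mem_coe.1 hx)) ⟨y, hlt⟩
  refine ⟨hpart, le_antisymm (stable_card_le hpart.2.2.2) ?_⟩
  rw [alphaNum]
  apply Finset.sup_le
  intro T _
  by_cases hT : IsStableSet (graphOf P) (↑T : Set (Fin n))
  swap
  · rw [if_neg hT]; exact Nat.zero_le _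
  rw [if_pos hT]
  have hsplit : (T.filter (HeightOne P)).card
      + (T.filter (fun y => ¬ HeightOne P y)).card = T.card :=
    Finset.card_filter_add_card_filter_not (p := HeightOne P)
  have hT0 : T.filter (fun y => ¬ HeightOne P y) ⊆ SP P := by
    intro t ht
    exact mem_SP.2 (Finset.mem_filter.1 ht).2
  rcases (T.filter (HeightOne P)).eq_empty_or_nonempty with he | ⟨y, hy⟩
  · have := Finset.card_le_card hT0
    rw [he] at hsplit
    simp only [Finset.card_empty, Nat.zero_add] at hsplit
    omega
  · have hyT : y ∈ T := (Finset.mem_filter.1 hy).1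
    obtain ⟨u, hu⟩ : HeightOne P y := (Finset.mem_filter.1 hy).2
    have huS : u ∈ SP P := mem_SP.2 (low_of_lt hu)
    have huy : u ≠ y := fun h' => P.irrefl y (h' ▸ hu)
    have huT : u ∉ T := by
      intro huT
      exact hT (Finset.mem_coe.2 huT) (Finset.mem_coe.2 hyT) huy ⟨huy, Or.inr (Or.inl hu)⟩
    have hsub : T.filter (fun y => ¬ HeightOne P y) ⊆ (SP P).erase u := by
      intro t ht
      exact Finset.mem_erase.2 ⟨fun h' => huT (h' ▸ (Finset.mem_filter.1 ht).1), hT0 ht⟩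
    have h1 : (T.filter (HeightOne P)).card ≤ 1 := by
      rw [Finset.card_le_one]
      intro a ha b hb
      by_contra hne
      exact hT (Finset.mem_coe.2 (Finset.mem_filter.1 ha).1)
        (Finset.mem_coe.2 (Finset.mem_filter.1 hb).1) hne
        ⟨hne, Or.inl ⟨(Finset.mem_filter.1 ha).2, (Finset.mem_filter.1 hb).2⟩⟩
    have h2 := Finset.card_le_card hsub
    have h3 : ((SP P).erase u).card = (SP P).card - 1 := Finset.card_erase_of_mem huS
    have h4 : 1 ≤ (SP P).card := Finset.card_pos.2 ⟨u, huS⟩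
    omega

lemma posetOf_graphOf (P : BipPoset n) (a b : Fin n) :
    (posetOf (graphOf P) (KP P) (SP P)).lt a b ↔ P.lt a b := by
  rw [posetOf_lt]
  constructor
  · rintro ⟨haS, hbK, -, -, hor⟩
    rcases hor with ⟨h1, _⟩ | hlt | hlt
    · exact absurd h1 (mem_SP.1 haS)
    · exact hlt
    · exact absurd (⟨b, hlt⟩ : HeightOne P a) (mem_SP.1 haS)
  · intro hlt
    have ha : ¬ HeightOne P a := low_of_lt hlt
    refine ⟨mem_SP.2 ha, mem_KP.2 ⟨a, hlt⟩, fun h' => ha (mem_KP.1 h'), ?_,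
      Or.inr (Or.inl hlt)⟩
    exact fun h' => P.irrefl a (h' ▸ hlt)

lemma graphOf_rel {P Q : BipPoset n} (h : BipPosetRel n P Q) :
    Nonempty (graphOf P ≃g graphOf Q) := by
  obtain ⟨e, he⟩ := h
  have hh1 : ∀ a, HeightOne P a ↔ HeightOne Q (e a) := by
    intro a
    constructor
    · rintro ⟨u, hu⟩
      exact ⟨e u, (he u a).1 hu⟩
    · rintro ⟨u, hu⟩
      refine ⟨e.symm u, (he (e.symm u) a).2 ?_⟩
      rwa [e.apply_symm_apply]
  refine ⟨⟨e, fun {a b} => ?_⟩⟩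
  rw [graphOf_adj, graphOf_adj]
  constructor
  · rintro ⟨hne, hor⟩
    refine ⟨fun h' => hne (by rw [h']), ?_⟩
    rcases hor with ⟨h1, h2⟩ | h' | h'
    · exact Or.inl ⟨(hh1 a).2 h1, (hh1 b).2 h2⟩
    · exact Or.inr (Or.inl ((he a b).2 h'))
    · exact Or.inr (Or.inr ((he b a).2 h'))
  · rintro ⟨hne, hor⟩
    refine ⟨fun h' => hne (e.injective h'), ?_⟩
    rcases hor with ⟨h1, h2⟩ | h' | h'
    · exact Or.inl ⟨(hh1 a).1 h1, (hh1 b).1 h2⟩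
    · exact Or.inr (Or.inl ((he a b).1 h'))
    · exact Or.inr (Or.inr ((he b a).1 h'))

/-! ### Round trips and assembly -/

lemma h1_iff_memK {G : SimpleGraph (Fin n)} {K S : Finset (Fin n)} (h : SMax G K S)
    (y : Fin n) : HeightOne (posetOf G K S) y ↔ y ∈ K := by
  constructor
  · rintro ⟨u, -, hK, -, -⟩
    exact hK
  · intro hk
    obtain ⟨s, hs, hadj⟩ := smax_covered h hk
    exact ⟨s, hs, hk, fun h' => Finset.disjoint_left.1 h.1.1 h' hs, hadj⟩

lemma graphOf_posetOf {G : SimpleGraph (Fin n)} {K S : Finset (Fin n)} (h : SMax G K S) :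
    Nonempty (graphOf (posetOf G K S) ≃g G) := by
  refine ⟨⟨Equiv.refl _, fun {a b} => ?_⟩⟩
  show G.Adj a b ↔ (graphOf (posetOf G K S)).Adj a b
  rw [graphOf_adj]
  simp only [h1_iff_memK h, posetOf_lt]
  constructor
  · intro hadj
    refine ⟨hadj.ne, ?_⟩
    by_cases haK : a ∈ K <;> by_cases hbK : b ∈ K
    · exact Or.inl ⟨haK, hbK⟩
    · have hbS : b ∈ S := mem_S_of_not_K h.1 hbK
      exact Or.inr (Or.inr ⟨hbS, haK, hbK, hadj.symm⟩)
    · have haS : a ∈ S := mem_S_of_not_K h.1 haK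
      exact Or.inr (Or.inl ⟨haS, hbK, haK, hadj⟩)
    · exact absurd hadj (stable_not_adj h.1 (mem_S_of_not_K h.1 haK)
        (mem_S_of_not_K h.1 hbK) hadj.ne)
  · rintro ⟨hne, hor⟩
    rcases hor with ⟨haK, hbK⟩ | hlt | hlt
    · exact clique_adj h.1 haK hbK hne
    · exact hlt.2.2.2
    · exact hlt.2.2.2.symm

noncomputable def toP (G : {G : SimpleGraph (Fin n) // IsSplit G}) : BipPoset n :=
  posetOf G.1 (exists_smax G.2).choose (exists_smax G.2).choose_spec.choose

lemma toP_smax (G : {G : SimpleGraph (Fin n) // IsSplit G}) :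
    SMax G.1 (exists_smax G.2).choose (exists_smax G.2).choose_spec.choose :=
  (exists_smax G.2).choose_spec.choose_spec

lemma toP_wd {G H : {G : SimpleGraph (Fin n) // IsSplit G}} (r : SplitIsoRel n G H) :
    BipPosetRel n (toP G) (toP H) := by
  obtain ⟨f⟩ := r
  exact bip_trans (posetOf_image_rel f)
    (two_smax_rel (smax_image f (toP_smax G)) (toP_smax H))

noncomputable def toG (P : BipPoset n) : {G : SimpleGraph (Fin n) // IsSplit G} :=
  ⟨graphOf P, KP P, SP P, (smax_graphOf P).1⟩

end SplitPosetAux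

/-- There is a bijection between isomorphism classes of split graphs on `n` vertices
and isomorphism classes of bipartite posets (posets of height at most one) on `n`
elements. -/
theorem split_poset_bijection (n : ℕ) :
    Nonempty (Quot (SplitIsoRel n) ≃ Quot (BipPosetRel n)) := by
  refine ⟨{
      toFun := Quot.lift (fun G => Quot.mk _ (SplitPosetAux.toP G))
        (fun G H r => Quot.sound (SplitPosetAux.toP_wd r)),
      invFun := Quot.lift (fun P => Quot.mk _ (SplitPosetAux.toG P))
        (fun P Q r => Quot.sound (SplitPosetAux.graphOf_rel r)),
      left_inv := ?_, right_inv := ?_ }⟩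
  · intro q
    induction q using Quot.ind with
    | _ G => exact Quot.sound (SplitPosetAux.graphOf_posetOf (SplitPosetAux.toP_smax G))
  · intro q
    induction q using Quot.ind with
    | _ P =>
      exact Quot.sound (SplitPosetAux.bip_trans
        (SplitPosetAux.two_smax_rel (SplitPosetAux.toP_smax (SplitPosetAux.toG P))
          (SplitPosetAux.smax_graphOf P))
        ⟨Equiv.refl _, fun a b => SplitPosetAux.posetOf_graphOf P a b⟩)
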